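/- Let s₁, s₂, s₃ > 0 and define s²(ρ₁,ρ₂,ρ₃) = s₁² + 4s₂² + s₃² − 4s₁s₂ρ₃ + 2s₁s₃ρ₂ − 4s₂s₃ρ₁, s₀² = s²(0,0,0), s̃_L² = min{(2s₂−(s₁+s₃))², (2s₂−√(s₁²+s₃²))²}, and s_L² = inf over the set D = {(ρ₁,ρ₂,ρ₃) : |ρᵢ| < 1 for all i, 1−ρ₁²−ρ₂²−ρ₃²+2ρ₁ρ₂ρ₃ > 0, s²(ρ₁,ρ₂,ρ₃) ≤ s₀²} of s²(ρ₁,ρ₂,ρ₃). Then s_L² ≤ s̃_L² ≤ s₀². -/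

import Mathlib

open Set

lemma aux_inf_le (S : Set ℝ) (hB : BddBelow S) (k C : ℝ) (hk : 0 < k)
    (h : ∀ t : ℝ, 0 ≤ t → t < 1 → C - k*t ∈ S) : sInf S ≤ C - k := by
  apply le_of_forall_pos_le_add
  intro ε hε
  set t : ℝ := max 0 (1 - ε/k) with ht
  have ht0 : 0 ≤ t := le_max_left _ _
  have ht1 : t < 1 := by
    apply max_lt one_pos
    have : 0 < ε / k := div_pos hε hk
    linarith
  have hmem := h t ht0 ht1
  have h1 : sInf S ≤ C - k*t := csInf_le hB hmem
  have h2 : 1 - ε/k ≤ t := le_max_right _ _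
  have : k * (1 - ε/k) ≤ k * t := by nlinarith
  have hkk : k * (ε/k) = ε := by field_simp
  nlinarith

theorem stmt_7 (s₁ s₂ s₃ : ℝ) (h₁ : 0 < s₁) (h₂ : 0 < s₂) (h₃ : 0 < s₃)
    (s2 : ℝ → ℝ → ℝ → ℝ)
    (hs2 : ∀ ρ₁ ρ₂ ρ₃ : ℝ, s2 ρ₁ ρ₂ ρ₃ =
      s₁^2 + 4*s₂^2 + s₃^2 - 4*s₁*s₂*ρ₃ + 2*s₁*s₃*ρ₂ - 4*s₂*s₃*ρ₁) :
    sInf {y : ℝ | ∃ ρ₁ ρ₂ ρ₃ : ℝ, |ρ₁| < 1 ∧ |ρ₂| < 1 ∧ |ρ₃| < 1 ∧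
        0 < 1 - ρ₁^2 - ρ₂^2 - ρ₃^2 + 2*ρ₁*ρ₂*ρ₃ ∧
        s2 ρ₁ ρ₂ ρ₃ ≤ s2 0 0 0 ∧ y = s2 ρ₁ ρ₂ ρ₃}
      ≤ min ((2*s₂ - (s₁ + s₃))^2) ((2*s₂ - Real.sqrt (s₁^2 + s₃^2))^2) ∧
    min ((2*s₂ - (s₁ + s₃))^2) ((2*s₂ - Real.sqrt (s₁^2 + s₃^2))^2)
      ≤ s2 0 0 0 := by
  set S : Set ℝ := {y : ℝ | ∃ ρ₁ ρ₂ ρ₃ : ℝ, |ρ₁| < 1 ∧ |ρ₂| < 1 ∧ |ρ₃| < 1 ∧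
        0 < 1 - ρ₁^2 - ρ₂^2 - ρ₃^2 + 2*ρ₁*ρ₂*ρ₃ ∧
        s2 ρ₁ ρ₂ ρ₃ ≤ s2 0 0 0 ∧ y = s2 ρ₁ ρ₂ ρ₃} with hS
  have hC : s2 0 0 0 = s₁^2 + 4*s₂^2 + s₃^2 := by rw [hs2]; ring
  set r : ℝ := Real.sqrt (s₁^2 + s₃^2) with hr
  have hr2 : r^2 = s₁^2 + s₃^2 := Real.sq_sqrt (by positivity)
  have hrpos : 0 < r := Real.sqrt_pos.mpr (by positivity)
  have hs1r : s₁ ≤ r := by nlinarith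
  have hs3r : s₃ ≤ r := by nlinarith
  -- Bounded below
  have hB : BddBelow S := by
    refine ⟨s₁^2 + 4*s₂^2 + s₃^2 - 4*s₁*s₂ - 2*s₁*s₃ - 4*s₂*s₃, ?_⟩
    rintro y ⟨ρ₁, ρ₂, ρ₃, ha1, ha2, ha3, _, _, rfl⟩
    rw [abs_lt] at ha1 ha2 ha3
    rw [hs2]
    nlinarith [ha1.1, ha1.2, ha2.1, ha2.2, ha3.1, ha3.2, mul_pos h₁ h₂,
      mul_pos h₁ h₃, mul_pos h₂ h₃]
  have h0mem : s2 0 0 0 ∈ S := ⟨0, 0, 0, by norm_num, by norm_num, by norm_num,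
      by norm_num, le_refl _, rfl⟩
  have hinf0 : sInf S ≤ s2 0 0 0 := csInf_le hB h0mem
  constructor
  · apply le_min
    · -- sInf ≤ (2s₂ - (s₁+s₃))^2
      set k : ℝ := 4*s₁*s₂ + 4*s₂*s₃ - 2*s₁*s₃ with hk
      have hA : (2*s₂ - (s₁ + s₃))^2 = s2 0 0 0 - k := by rw [hC]; ring
      rcases le_or_gt k 0 with hkle | hkpos
      · rw [hA]; linarith
      · rw [hA]
        apply aux_inf_le S hB k (s2 0 0 0) hkpos
        intro t ht0 ht1
        refine ⟨t, t, t, ?_, ?_, ?_, ?_, ?_, ?_⟩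
        · rw [abs_lt]; constructor <;> linarith
        · rw [abs_lt]; constructor <;> linarith
        · rw [abs_lt]; constructor <;> linarith
        · have h1t : (0:ℝ) < 1 - t := by linarith
          nlinarith [mul_pos (pow_pos h1t 2) (by linarith : (0:ℝ) < 1 + 2*t)]
        · simp only [hs2]; nlinarith
        · simp only [hs2, hk]; ring
    · -- sInf ≤ (2s₂ - r)^2
      have hkpos : 0 < 4*s₂*r := by positivity
      have hA : (2*s₂ - r)^2 = s2 0 0 0 - 4*s₂*r := by rw [hC]; nlinarith
      rw [hA]
      apply aux_inf_le S hB (4*s₂*r) (s2 0 0 0) hkpos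
      intro t ht0 ht1
      refine ⟨t*s₃/r, 0, t*s₁/r, ?_, ?_, ?_, ?_, ?_, ?_⟩
      · rw [abs_lt]
        constructor
        · have : 0 ≤ t*s₃/r := by positivity
          linarith
        · rw [div_lt_one hrpos]; nlinarith
      · simp
      · rw [abs_lt]
        constructor
        · have : 0 ≤ t*s₁/r := by positivity
          linarith
        · rw [div_lt_one hrpos]; nlinarith
      · have key : (t*s₃/r)^2 + (t*s₁/r)^2 = t^2 := by
          field_simp
          linear_combination (-(t^2)) * hr2
        nlinarith
      · simp only [hs2]
        have h : 4*s₁*s₂*(t*s₁/r) + 4*s₂*s₃*(t*s₃/r) = 4*s₂*r*t := by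
          field_simp
          linear_combination (-t) * hr2
        nlinarith [h]
      · simp only [hs2]
        have h : 4*s₁*s₂*(t*s₁/r) + 4*s₂*s₃*(t*s₃/r) = 4*s₂*r*t := by
          field_simp
          linear_combination (-t) * hr2
        linear_combination h
  · refine le_trans (min_le_right _ _) ?_
    rw [hC]
    have hq : (2*s₂ - r)^2 = 4*s₂^2 - 4*s₂*r + (s₁^2 + s₃^2) := by
      rw [← hr2]; ring
    have hpos : 0 < 4*s₂*r := by positivity
    linarith
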